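/- In R = ℤ[w,z]/(w² - 2w, wz - 2w), for any k ≥ 0, k((z^k)) = k, where k(I) = min{m ≥ 0 : ∃x ∈ I, wx = 2^m·w}. -/

import Mathlib

open MvPolynomial

noncomputable def SWFIdeal : Ideal (MvPolynomial (Fin 2) ℤ) :=
  Ideal.span {(X 0 : MvPolynomial (Fin 2) ℤ) ^ 2 - 2 * X 0,
    (X 0 : MvPolynomial (Fin 2) ℤ) * X 1 - 2 * X 0}

abbrev SWFRing : Type := MvPolynomial (Fin 2) ℤ ⧸ SWFIdeal

noncomputable def w : SWFRing := Ideal.Quotient.mk SWFIdeal (X 0)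
noncomputable def z : SWFRing := Ideal.Quotient.mk SWFIdeal (X 1)

/-- `k(I) = min {m ≥ 0 : ∃ x ∈ I, wx = 2^m·w}`. -/
noncomputable def kIdeal (I : Ideal SWFRing) : ℕ :=
  sInf {m : ℕ | ∃ x ∈ I, w * x = 2 ^ m * w}

noncomputable def ψ : SWFRing →+* ℤ :=
  Ideal.Quotient.lift SWFIdeal (eval (fun _ => (2 : ℤ))) (by
    intro a ha
    refine Submodule.span_induction ?_ ?_ ?_ ?_ ha
    · intro x hx
      rcases hx with h | h <;> subst h <;> simp
    · simp
    · intro x y _ _ hx hy; simp [hx, hy]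
    · intro c x _ hx; simp [hx])

lemma psi_w : ψ w = 2 := by simp [ψ, w]

lemma psi_z : ψ z = 2 := by simp [ψ, z]

lemma w_mul_w : w * w = 2 * w := by
  have : Ideal.Quotient.mk SWFIdeal ((X 0 : MvPolynomial (Fin 2) ℤ) ^ 2 - 2 * X 0) = 0 := by
    rw [Ideal.Quotient.eq_zero_iff_mem]
    exact Ideal.subset_span (by left; rfl)
  have h := this
  rw [map_sub, sub_eq_zero] at h
  simpa [w, pow_two, map_mul, map_pow, map_ofNat] using h

lemma w_mul_z : w * z = 2 * w := by
  have : Ideal.Quotient.mk SWFIdeal ((X 0 : MvPolynomial (Fin 2) ℤ) * X 1 - 2 * X 0) = 0 := by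
    rw [Ideal.Quotient.eq_zero_iff_mem]
    exact Ideal.subset_span (by right; rfl)
  have h := this
  rw [map_sub, sub_eq_zero] at h
  simpa [w, z, map_mul, map_ofNat] using h

lemma w_mul (r : SWFRing) : w * r = (ψ r : SWFRing) * w := by
  obtain ⟨f, rfl⟩ := Ideal.Quotient.mk_surjective r
  induction f using MvPolynomial.induction_on with
  | C a =>
      simp [ψ, Ideal.Quotient.lift_mk]
      have : Ideal.Quotient.mk SWFIdeal (C a) = (a : SWFRing) := by
        simp [map_intCast]
      exact mul_comm _ _
  | add p q hp hq =>
      rw [map_add, mul_add, hp, hq, map_add]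
      push_cast
      ring
  | mul_X p i hp =>
      rw [map_mul, ← mul_assoc, hp]
      have hXi : w * Ideal.Quotient.mk SWFIdeal (X i) = 2 * w := by
        fin_cases i
        · exact w_mul_w
        · exact w_mul_z
      rw [mul_assoc, hXi, map_mul]
      have : ψ (Ideal.Quotient.mk SWFIdeal (X i)) = 2 := by
        simp [ψ]
      rw [this]
      push_cast
      ring

lemma w_torsionfree (n : ℤ) (h : (n : SWFRing) * w = 0) : n = 0 := by
  have := congrArg ψ h
  simp [psi_w] at this
  omega

/-- For any `k ≥ 0`, `k((z^k)) = k`. -/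
theorem stmt_11 (k : ℕ) : kIdeal (Ideal.span {z ^ k}) = k := by
  have hwzk : w * z ^ k = 2 ^ k * w := by
    induction k with
    | zero => simp
    | succ n ih =>
        rw [pow_succ, ← mul_assoc, ih, mul_assoc, w_mul_z, pow_succ]
        ring
  unfold kIdeal
  apply le_antisymm
  · exact Nat.sInf_le ⟨z ^ k, Ideal.subset_span rfl, hwzk⟩
  · refine le_csInf ⟨k, z ^ k, Ideal.subset_span rfl, hwzk⟩ ?_
    rintro m ⟨x, hx, hwx⟩
    rw [Ideal.mem_span_singleton] at hx
    obtain ⟨r, rfl⟩ := hx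
    rw [w_mul] at hwx
    have hψ : ψ (z ^ k * r) = 2 ^ k * ψ r := by
      rw [map_mul, map_pow, psi_z]
    rw [hψ] at hwx
    have hkey : ((2 ^ k * ψ r - 2 ^ m : ℤ) : SWFRing) * w = 0 := by
      rw [Int.cast_sub, sub_mul, hwx]
      push_cast
      ring
    have h0 := w_torsionfree _ hkey
    have hdvd : (2 : ℤ) ^ k ∣ 2 ^ m := ⟨ψ r, by linarith⟩
    by_contra hlt
    push_neg at hlt
    have : (2 : ℤ) ^ m < 2 ^ k := by
      exact pow_lt_pow_right₀ (by norm_num) hlt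
    have hle : (2 : ℤ) ^ k ≤ 2 ^ m :=
      Int.le_of_dvd (by positivity) hdvd
    linarith
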